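/- arXiv:2502.20191 — 2 statements merged into one kernel-verified Lean document; each statement's English description precedes it below -/
import Mathlib

section
/- Let $\mathcal{H}(\mathbb{Z})$ be the integer Heisenberg group and, for a positive integer $m$, let $H_m \le \mathcal{H}(\mathbb{Z})$ be the subgroup of matrices $A$ with $m \mid A_{12}$. Then the commutator subgroup of $H_m$ equals the set of upper unitriangular integer matrices $A$ with $A_{12} = 0$, $A_{23} = 0$, and $m \mid A_{13}$. -/
open Matrix

/-- A `3 × 3` matrix is upper unitriangular if it has `1`s on the diagonal
and `0`s below the diagonal. -/
def IsUnitri {R : Type*} [CommRing R] (A : Matrix (Fin 3) (Fin 3) R) : Prop :=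
  A 0 0 = 1 ∧ A 1 1 = 1 ∧ A 2 2 = 1 ∧ A 1 0 = 0 ∧ A 2 0 = 0 ∧ A 2 1 = 0

/-- The Heisenberg group over `R`: upper unitriangular `3 × 3` matrices. -/
def Heisenberg (R : Type*) [CommRing R] : Type _ :=
  {A : Matrix (Fin 3) (Fin 3) R // IsUnitri A}

namespace Heisenberg

variable {R : Type*} [CommRing R]

theorem isUnitri_mul {A B : Matrix (Fin 3) (Fin 3) R} (hA : IsUnitri A)
    (hB : IsUnitri B) : IsUnitri (A * B) := by
  obtain ⟨a1, a2, a3, a4, a5, a6⟩ := hA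
  obtain ⟨b1, b2, b3, b4, b5, b6⟩ := hB
  refine ⟨?_, ?_, ?_, ?_, ?_, ?_⟩ <;>
    simp [Matrix.mul_apply, Fin.sum_univ_three, a1, a2, a3, a4, a5, a6,
      b1, b2, b3, b4, b5, b6]

instance : Group (Heisenberg R) where
  mul A B := ⟨A.1 * B.1, isUnitri_mul A.2 B.2⟩
  one := ⟨1, by refine ⟨?_, ?_, ?_, ?_, ?_, ?_⟩ <;> simp [Matrix.one_apply]⟩
  inv A := ⟨!![1, -(A.1 0 1), A.1 0 1 * A.1 1 2 - A.1 0 2;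
               0, 1, -(A.1 1 2);
               0, 0, 1], by
    refine ⟨?_, ?_, ?_, ?_, ?_, ?_⟩ <;> simp [Matrix.vecHead, Matrix.vecTail]⟩
  mul_assoc A B C := Subtype.ext (mul_assoc A.1 B.1 C.1)
  one_mul A := Subtype.ext (one_mul A.1)
  mul_one A := Subtype.ext (mul_one A.1)
  inv_mul_cancel A := by
    obtain ⟨a1, a2, a3, a4, a5, a6⟩ := A.2
    apply Subtype.ext
    show _ * A.1 = (1 : Matrix (Fin 3) (Fin 3) R)
    ext i j
    fin_cases i <;> fin_cases j <;>
      simp [Matrix.mul_apply, Fin.sum_univ_three, Matrix.one_apply,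
        a1, a2, a3, a4, a5, a6] <;> ring

@[simp] theorem mul_val (A B : Heisenberg R) : (A * B).1 = A.1 * B.1 := rfl

@[simp] theorem one_val : ((1 : Heisenberg R)).1 = (1 : Matrix (Fin 3) (Fin 3) R) := rfl

@[simp] theorem inv_val (A : Heisenberg R) :
    (A⁻¹).1 = !![1, -(A.1 0 1), A.1 0 1 * A.1 1 2 - A.1 0 2;
                 0, 1, -(A.1 1 2);
                 0, 0, 1] := rfl

theorem mul_apply_01 (A B : Heisenberg R) :
    (A * B).1 0 1 = A.1 0 1 + B.1 0 1 := by
  obtain ⟨a1, a2, a3, a4, a5, a6⟩ := A.2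
  obtain ⟨b1, b2, b3, b4, b5, b6⟩ := B.2
  simp [Matrix.mul_apply, Fin.sum_univ_three, a1, a2, a3, a4, a5, a6,
    b1, b2, b3, b4, b5, b6]
  ring

end Heisenberg


/-- The subgroup `H_m` of the integer Heisenberg group consisting of matrices
whose `(1,2)`-entry is divisible by `m`. -/
def Hsub (m : ℕ) : Subgroup (Heisenberg ℤ) where
  carrier := {A | (m : ℤ) ∣ A.1 0 1}
  mul_mem' := by
    intro A B hA hB
    simpa [Heisenberg.mul_apply_01] using dvd_add hA hB
  one_mem' := by simp [Matrix.one_apply]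
  inv_mem' := by
    intro A hA
    simpa using hA.neg_right

instance Hsub_normal (m : ℕ) : (Hsub m).Normal := by
  constructor
  intro A hA g
  have : (g * A * g⁻¹).1 0 1 = A.1 0 1 := by
    rw [Heisenberg.mul_apply_01, Heisenberg.mul_apply_01]
    simp
  show (m : ℤ) ∣ _
  rw [this]
  exact hA


open scoped commutatorElement

theorem Heisenberg.mul_apply_12 {R : Type*} [CommRing R] (A B : Heisenberg R) :
    (A * B).1 1 2 = A.1 1 2 + B.1 1 2 := by
  obtain ⟨a1, a2, a3, a4, a5, a6⟩ := A.2
  obtain ⟨b1, b2, b3, b4, b5, b6⟩ := B.2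
  simp [Matrix.mul_apply, Fin.sum_univ_three, a1, a2, a3, a4, a5, a6,
    b1, b2, b3, b4, b5, b6]
  ring

theorem Heisenberg.mul_apply_02 {R : Type*} [CommRing R] (A B : Heisenberg R) :
    (A * B).1 0 2 = A.1 0 2 + A.1 0 1 * B.1 1 2 + B.1 0 2 := by
  obtain ⟨a1, a2, a3, a4, a5, a6⟩ := A.2
  obtain ⟨b1, b2, b3, b4, b5, b6⟩ := B.2
  simp [Matrix.mul_apply, Fin.sum_univ_three, a1, a2, a3, a4, a5, a6,
    b1, b2, b3, b4, b5, b6]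
  ring

theorem Heisenberg.commutator_val {R : Type*} [CommRing R] (g h : Heisenberg R) :
    (⁅g, h⁆).1 = !![1, 0, g.1 0 1 * h.1 1 2 - g.1 1 2 * h.1 0 1; 0, 1, 0; 0, 0, 1] := by
  obtain ⟨a1, a2, a3, a4, a5, a6⟩ := g.2
  obtain ⟨b1, b2, b3, b4, b5, b6⟩ := h.2
  show (g.1 * h.1 * _ * _ : Matrix (Fin 3) (Fin 3) R) = _
  ext i j
  fin_cases i <;> fin_cases j <;>
    simp [Matrix.mul_apply, Fin.sum_univ_three, Matrix.vecHead, Matrix.vecTail,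
      a1, a2, a3, a4, a5, a6, b1, b2, b3, b4, b5, b6] <;> ring

/-- The candidate for the commutator subgroup of `Hsub m`. -/
def Ksub (m : ℕ) : Subgroup ↥(Hsub m) where
  carrier := {A | (A : Heisenberg ℤ).1 0 1 = 0 ∧ (A : Heisenberg ℤ).1 1 2 = 0 ∧
    (m : ℤ) ∣ (A : Heisenberg ℤ).1 0 2}
  mul_mem' := by
    rintro A B ⟨hA1, hA2, hA3⟩ ⟨hB1, hB2, hB3⟩
    refine ⟨?_, ?_, ?_⟩ <;>
      simp [Heisenberg.mul_apply_01, Heisenberg.mul_apply_12, Heisenberg.mul_apply_02,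
        hA1, hA2, hB1, hB2]
    exact dvd_add hA3 hB3
  one_mem' := by
    refine ⟨?_, ?_, ?_⟩ <;> simp [Matrix.one_apply]
  inv_mem' := by
    rintro A ⟨hA1, hA2, hA3⟩
    refine ⟨?_, ?_, ?_⟩ <;>
      simp [Heisenberg.inv_val, hA1, hA2]
    exact hA3

/-- The commutator subgroup of `H_m` consists exactly of the unitriangular integer
matrices with vanishing `(1,2)`- and `(2,3)`-entries and `(1,3)`-entry divisible by `m`. -/
theorem stmt_6 (m : ℕ) (hm : 0 < m) (A : Hsub m) :
    A ∈ commutator ↥(Hsub m) ↔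
      (A : Heisenberg ℤ).1 0 1 = 0 ∧ (A : Heisenberg ℤ).1 1 2 = 0 ∧
        (m : ℤ) ∣ (A : Heisenberg ℤ).1 0 2 := by
  constructor
  · intro hA
    have hle : commutator ↥(Hsub m) ≤ Ksub m := by
      rw [commutator, Subgroup.commutator_le]
      intro g _ h _
      have hval : ((⁅g, h⁆ : ↥(Hsub m)) : Heisenberg ℤ) = ⁅(g : Heisenberg ℤ), (h : Heisenberg ℤ)⁆ := rfl
      refine ⟨?_, ?_, ?_⟩ <;> rw [hval, Heisenberg.commutator_val] <;> simp
      exact dvd_sub (Dvd.dvd.mul_right g.2 _) ((h.2).mul_left _)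
    exact hle hA
  · rintro ⟨h1, h2, h3⟩
    obtain ⟨k, hk⟩ := h3
    set g : ↥(Hsub m) := ⟨⟨!![1, (m : ℤ), 0; 0, 1, 0; 0, 0, 1],
      by refine ⟨?_, ?_, ?_, ?_, ?_, ?_⟩ <;> simp [Matrix.vecHead, Matrix.vecTail]⟩, ⟨1, by simp⟩⟩ with hg
    set h : ↥(Hsub m) := ⟨⟨!![1, 0, 0; 0, 1, (k : ℤ); 0, 0, 1],
      by refine ⟨?_, ?_, ?_, ?_, ?_, ?_⟩ <;> simp [Matrix.vecHead, Matrix.vecTail]⟩, ⟨0, by simp⟩⟩ with hh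
    have : A = ⁅g, h⁆ := by
      apply Subtype.ext; apply Subtype.ext
      have hval : ((⁅g, h⁆ : ↥(Hsub m)) : Heisenberg ℤ) = ⁅(g : Heisenberg ℤ), (h : Heisenberg ℤ)⁆ := rfl
      rw [hval, Heisenberg.commutator_val]
      obtain ⟨a1, a2, a3, a4, a5, a6⟩ := (A : Heisenberg ℤ).2
      ext i j
      fin_cases i <;> fin_cases j <;>
        simp [Matrix.vecHead, Matrix.vecTail, a1, a2, a3, a4, a5, a6, h1, h2, hk, hg, hh]
    rw [this]
    exact Subgroup.commutator_mem_commutator (Subgroup.mem_top g) (Subgroup.mem_top h)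
end

section
/- Let $H_m$ be the subgroup of the integer Heisenberg group consisting of upper unitriangular $3 \times 3$ integer matrices $A$ with $m \mid A_{12}$, for a positive integer $m$. Then the abelianization of $H_m$ is isomorphic to $\mathbb{Z} \times \mathbb{Z} \times \mathbb{Z}/m\mathbb{Z}$. -/
open Matrix

namespace Heisenberg

theorem mul_apply_12_s7 (A B : Heisenberg ℤ) :
    (A * B).1 1 2 = A.1 1 2 + B.1 1 2 := by
  obtain ⟨a1, a2, a3, a4, a5, a6⟩ := A.2
  obtain ⟨b1, b2, b3, b4, b5, b6⟩ := B.2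
  simp [Matrix.mul_apply, Fin.sum_univ_three, a1, a2, a3, a4, a5, a6,
    b1, b2, b3, b4, b5, b6]
  ring

theorem mul_apply_02_s7 (A B : Heisenberg ℤ) :
    (A * B).1 0 2 = A.1 0 2 + B.1 0 2 + A.1 0 1 * B.1 1 2 := by
  obtain ⟨a1, a2, a3, a4, a5, a6⟩ := A.2
  obtain ⟨b1, b2, b3, b4, b5, b6⟩ := B.2
  simp [Matrix.mul_apply, Fin.sum_univ_three, a1, a2, a3, a4, a5, a6,
    b1, b2, b3, b4, b5, b6]
  ring

end Heisenberg

/-- The abelianization map `H_m → ℤ × ℤ × ℤ/m`. -/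
def hphi (m : ℕ) : ↥(Hsub m) →* Multiplicative (ℤ × ℤ × ZMod m) where
  toFun A := Multiplicative.ofAdd
    (A.1.1 0 1 / (m : ℤ), A.1.1 1 2, ((A.1.1 0 2 : ℤ) : ZMod m))
  map_one' := by
    simp [Matrix.one_apply]
  map_mul' A B := by
    obtain ⟨A, hA⟩ := A
    obtain ⟨B, hB⟩ := B
    have h1 : ((A * B : Heisenberg ℤ)).1 0 1 = A.1 0 1 + B.1 0 1 :=
      Heisenberg.mul_apply_01 A B
    have h2 : ((A * B : Heisenberg ℤ)).1 1 2 = A.1 1 2 + B.1 1 2 :=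
      Heisenberg.mul_apply_12_s7 A B
    have h3 : ((A * B : Heisenberg ℤ)).1 0 2
        = A.1 0 2 + B.1 0 2 + A.1 0 1 * B.1 1 2 :=
      Heisenberg.mul_apply_02_s7 A B
    have hdvd : (m : ℤ) ∣ A.1 0 1 := hA
    refine congrArg Multiplicative.ofAdd (Prod.ext ?_ (Prod.ext ?_ ?_))
    · show ((A * B : Heisenberg ℤ)).1 0 1 / (m : ℤ)
        = A.1 0 1 / (m : ℤ) + B.1 0 1 / (m : ℤ)
      rw [h1, Int.add_ediv_of_dvd_left hdvd]
    · exact h2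
    · show (((A * B : Heisenberg ℤ)).1 0 2 : ZMod m)
        = ((A.1 0 2 : ZMod m)) + (B.1 0 2 : ZMod m)
      rw [h3]
      push_cast
      have : ((A.1 0 1 : ℤ) : ZMod m) = 0 := by
        rwa [ZMod.intCast_zmod_eq_zero_iff_dvd]
      rw [this]
      ring

theorem hphi_surjective (m : ℕ) (hm : 0 < m) : Function.Surjective (hphi m) := by
  intro g
  have hmz : (m : ℤ) ≠ 0 := by exact_mod_cast hm.ne'
  refine ⟨⟨⟨!![1, (m : ℤ) * g.toAdd.1, (ZMod.cast g.toAdd.2.2 : ℤ);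
      0, 1, g.toAdd.2.1; 0, 0, 1], ?_⟩, ?_⟩, ?_⟩
  · refine ⟨?_, ?_, ?_, ?_, ?_, ?_⟩ <;> simp [Matrix.vecHead, Matrix.vecTail]
  · show (m : ℤ) ∣ _
    simp
  · refine congrArg Multiplicative.ofAdd (Prod.ext ?_ (Prod.ext ?_ ?_))
    · show (m : ℤ) * g.toAdd.1 / (m : ℤ) = g.toAdd.1
      exact Int.mul_ediv_cancel_left _ hmz
    · rfl
    · show (((ZMod.cast g.toAdd.2.2 : ℤ) : ZMod m)) = g.toAdd.2.2
      exact ZMod.intCast_zmod_cast _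

open scoped commutatorElement in
theorem ker_hphi (m : ℕ) (hm : 0 < m) :
    MonoidHom.ker (hphi m) = commutator ↥(Hsub m) := by
  apply le_antisymm
  · intro A hA
    obtain ⟨⟨M, hM⟩, hdvd⟩ := A
    have hdvd' : (m : ℤ) ∣ M 0 1 := hdvd
    rw [MonoidHom.mem_ker] at hA
    have h1 : M 0 1 / (m : ℤ) = 0 := congrArg (fun p => p.toAdd.1) hA
    have h2 : M 1 2 = 0 := congrArg (fun p => p.toAdd.2.1) hA
    have h3 : ((M 0 2 : ℤ) : ZMod m) = 0 := congrArg (fun p => p.toAdd.2.2) hA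
    have ha : M 0 1 = 0 := by
      have := Int.ediv_mul_cancel hdvd'
      rw [h1] at this
      simpa using this.symm
    have hc : (m : ℤ) ∣ M 0 2 := by
      rwa [ZMod.intCast_zmod_eq_zero_iff_dvd] at h3
    -- A is the commutator of X = (m,0,0) and Y = (0, M02/m, 0)
    set t : ℤ := M 0 2 / (m : ℤ) with ht
    have hmt : (m : ℤ) * t = M 0 2 := Int.mul_ediv_cancel' hc
    have hX : IsUnitri !![(1:ℤ), (m:ℤ), 0; 0, 1, 0; 0, 0, 1] := by
      refine ⟨?_, ?_, ?_, ?_, ?_, ?_⟩ <;> simp [Matrix.vecHead, Matrix.vecTail]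
    have hY : IsUnitri !![(1:ℤ), 0, 0; 0, 1, t; 0, 0, 1] := by
      refine ⟨?_, ?_, ?_, ?_, ?_, ?_⟩ <;> simp [Matrix.vecHead, Matrix.vecTail]
    set X : ↥(Hsub m) := ⟨⟨_, hX⟩, ⟨1, by simp⟩⟩ with hXdef
    set Y : ↥(Hsub m) := ⟨⟨_, hY⟩, ⟨0, by simp⟩⟩ with hYdef
    have : (⟨⟨M, hM⟩, hdvd⟩ : ↥(Hsub m)) = ⁅X, Y⁆ := by
      rw [commutatorElement_def]
      apply Subtype.ext
      apply Subtype.ext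
      show M = (((X * Y * X⁻¹ * Y⁻¹ : ↥(Hsub m)) : Heisenberg ℤ)).1
      have e : (((X * Y * X⁻¹ * Y⁻¹ : ↥(Hsub m)) : Heisenberg ℤ)).1
          = ((X : Heisenberg ℤ) * (Y : Heisenberg ℤ)
            * (X : Heisenberg ℤ)⁻¹ * (Y : Heisenberg ℤ)⁻¹).1 := rfl
      rw [e]
      rw [Heisenberg.mul_val, Heisenberg.mul_val, Heisenberg.mul_val, Heisenberg.inv_val, Heisenberg.inv_val]
      obtain ⟨a1, a2, a3, a4, a5, a6⟩ := hM
      ext i j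
      fin_cases i <;> fin_cases j <;>
        simp [hXdef, hYdef, Matrix.mul_apply, Fin.sum_univ_three,
          Matrix.vecHead, Matrix.vecTail, a1, a2, a3, a4, a5, a6, ha, h2] <;>
        omega
    rw [this]
    exact Subgroup.commutator_mem_commutator (Subgroup.mem_top X) (Subgroup.mem_top Y)
  · exact Abelianization.commutator_subset_ker (hphi m)

/-- The abelianization of `H_m` is isomorphic to `ℤ × ℤ × ℤ/mℤ`. -/
theorem stmt_7 (m : ℕ) (hm : 0 < m) :
    Nonempty (Abelianization ↥(Hsub m) ≃* Multiplicative (ℤ × ℤ × ZMod m)) := by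
  exact ⟨((QuotientGroup.quotientMulEquivOfEq (ker_hphi m hm)).symm.trans
    (QuotientGroup.quotientKerEquivOfSurjective (hphi m) (hphi_surjective m hm)))⟩
end
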